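/- Let h, u ∈ ℂ[[X,Y]] be formal power series in two variables with u(0,0) ≠ 0 and h(0,0) = 0, and set g = u·h. Then for every positive integer N there is a bijection between the jet spaces X_{N,1}(g) and X_{N,1}(h). -/

import Mathlib

open PowerSeries

-- vanishing lemma
lemma vanish {x y : PowerSeries ℂ} (hx : constantCoeff x = 0)
    (hy : constantCoeff y = 0) {a b k : ℕ} (hk : k < a + b) :
    coeff k (x ^ a * y ^ b) = 0 := by
  have hxd : (X : PowerSeries ℂ) ^ a ∣ x ^ a := pow_dvd_pow_of_dvd (X_dvd_iff.mpr hx) a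
  have hyd : (X : PowerSeries ℂ) ^ b ∣ y ^ b := pow_dvd_pow_of_dvd (X_dvd_iff.mpr hy) b
  have : (X : PowerSeries ℂ) ^ (a + b) ∣ x ^ a * y ^ b := by
    rw [pow_add]; exact mul_dvd_mul hxd hyd
  exact (X_pow_dvd_iff.mp this) k hk

-- Fin 2 finsupp decomposition
lemma fin2_decomp (f : Fin 2 →₀ ℕ) :
    f = Finsupp.single 0 (f 0) + Finsupp.single 1 (f 1) := by
  ext i
  fin_cases i <;> simp [Finsupp.single_apply]

-- reindex Finsupp antidiagonal on Fin 2 by product of Nat antidiagonals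
lemma antidiag_fin2 (A B : ℕ) (f : (Fin 2 →₀ ℕ) → (Fin 2 →₀ ℕ) → ℂ) :
    ∑ p ∈ Finset.HasAntidiagonal.antidiagonal (Finsupp.single (0 : Fin 2) A + Finsupp.single 1 B),
      f p.1 p.2
    = ∑ q ∈ Finset.HasAntidiagonal.antidiagonal A ×ˢ Finset.HasAntidiagonal.antidiagonal B,
        f (Finsupp.single 0 q.1.1 + Finsupp.single 1 q.2.1)
          (Finsupp.single 0 q.1.2 + Finsupp.single 1 q.2.2) := by
  refine Finset.sum_nbij' (i := fun p => ((p.1 0, p.2 0), (p.1 1, p.2 1)))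
    (j := fun q => (Finsupp.single 0 q.1.1 + Finsupp.single 1 q.2.1,
      Finsupp.single 0 q.1.2 + Finsupp.single 1 q.2.2)) ?_ ?_ ?_ ?_ ?_
  · intro p hp
    rw [Finset.HasAntidiagonal.mem_antidiagonal] at hp
    simp only [Finset.mem_product, Finset.HasAntidiagonal.mem_antidiagonal]
    constructor
    · have := congrArg (fun g => g 0) hp
      simpa [Finsupp.single_apply] using this
    · have := congrArg (fun g => g 1) hp
      simpa [Finsupp.single_apply] using this
  · intro q hq
    simp only [Finset.mem_product, Finset.HasAntidiagonal.mem_antidiagonal] at hq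
    rw [Finset.HasAntidiagonal.mem_antidiagonal]
    ext i
    fin_cases i <;> simp [Finsupp.single_apply, hq.1, hq.2]
  · intro p hp
    have h1 := fin2_decomp p.1
    have h2 := fin2_decomp p.2
    exact Prod.ext h1.symm h2.symm
  · intro q hq
    simp [Finsupp.single_apply]
  · intro p hp
    rw [fin2_decomp p.1, fin2_decomp p.2]
    simp [Finsupp.single_apply]

-- triangle lemma
lemma triangle {M : Type*} [AddCommMonoid M] (k : ℕ) (t : ℕ → ℕ → M)
    (ht : ∀ a c, k < a + c → t a c = 0) :
    ∑ A ∈ Finset.range (k+1), ∑ p ∈ Finset.HasAntidiagonal.antidiagonal A, t p.1 p.2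
      = ∑ a ∈ Finset.range (k+1), ∑ c ∈ Finset.range (k+1), t a c := by
  have step : ∀ A ∈ Finset.range (k+1),
      ∑ p ∈ Finset.HasAntidiagonal.antidiagonal A, t p.1 p.2
        = ∑ a ∈ Finset.range (k+1), ∑ c ∈ Finset.range (k+1),
            if a + c = A then t a c else 0 := by
    intro A hA
    rw [Finset.mem_range] at hA
    rw [← Finset.sum_product']
    rw [← Finset.sum_filter]
    apply Finset.sum_congr _ (fun _ _ => rfl)
    ext q
    simp only [Finset.mem_filter, Finset.mem_product, Finset.mem_range,
      Finset.HasAntidiagonal.mem_antidiagonal]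
    constructor
    · intro hq
      refine ⟨⟨?_, ?_⟩, hq⟩ <;> omega
    · rintro ⟨_, hq⟩; exact hq
  rw [Finset.sum_congr rfl step, Finset.sum_comm]
  apply Finset.sum_congr rfl
  intro a _
  rw [Finset.sum_comm]
  apply Finset.sum_congr rfl
  intro c _
  rw [Finset.sum_ite_eq (Finset.range (k+1)) (a + c) (fun _ => t a c)]
  by_cases hac : a + c ∈ Finset.range (k+1)
  · simp [hac]
  · rw [if_neg hac]
    rw [Finset.mem_range] at hac
    exact (ht a c (by omega)).symm

/-- Evaluation `F(x,y)` of a two-variable formal power series `F ∈ ℂ[[X,Y]]` at a pair of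
one-variable power series `x, y ∈ ℂ[[t]]`.  (The formula below computes the correct
substitution whenever `x` and `y` have zero constant term.) -/
noncomputable def mvEval (F : MvPowerSeries (Fin 2) ℂ) (x y : PowerSeries ℂ) :
    PowerSeries ℂ :=
  PowerSeries.mk fun k =>
    ∑ ab ∈ Finset.range (k + 1) ×ˢ Finset.range (k + 1),
      MvPowerSeries.coeff (Finsupp.single 0 ab.1 + Finsupp.single 1 ab.2) F *
        PowerSeries.coeff k (x ^ ab.1 * y ^ ab.2)


lemma coeff_mvEval (F : MvPowerSeries (Fin 2) ℂ) (x y : PowerSeries ℂ) (k : ℕ) :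
    coeff k (mvEval F x y) =
      ∑ a ∈ Finset.range (k + 1), ∑ b ∈ Finset.range (k + 1),
        MvPowerSeries.coeff (Finsupp.single 0 a + Finsupp.single 1 b) F *
          PowerSeries.coeff k (x ^ a * y ^ b) := by
  rw [mvEval, coeff_mk, ← Finset.sum_product']

lemma mvEval_mul (F G : MvPowerSeries (Fin 2) ℂ) (x y : PowerSeries ℂ)
    (hx : constantCoeff x = 0) (hy : constantCoeff y = 0) :
    mvEval (F * G) x y = mvEval F x y * mvEval G x y := by
  ext k
  set R := Finset.range (k + 1) with hR
  set M : ℂ := ∑ ab ∈ R ×ˢ R, ∑ ce ∈ R ×ˢ R,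
      (MvPowerSeries.coeff (Finsupp.single 0 ab.1 + Finsupp.single 1 ab.2) F *
       MvPowerSeries.coeff (Finsupp.single 0 ce.1 + Finsupp.single 1 ce.2) G) *
        coeff k (x ^ (ab.1 + ce.1) * y ^ (ab.2 + ce.2)) with hM
  have ext1 : ∀ F' : MvPowerSeries (Fin 2) ℂ, ∀ i ≤ k,
      coeff i (mvEval F' x y)
        = ∑ ab ∈ R ×ˢ R,
            MvPowerSeries.coeff (Finsupp.single 0 ab.1 + Finsupp.single 1 ab.2) F' *
              coeff i (x ^ ab.1 * y ^ ab.2) := by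
    intro F' i hi
    rw [mvEval, coeff_mk]
    apply Finset.sum_subset
    · exact Finset.product_subset_product (Finset.range_subset_range.2 (by omega))
        (Finset.range_subset_range.2 (by omega))
    · intro ab _ hab
      simp only [Finset.mem_product, Finset.mem_range, not_and_or, not_lt] at hab
      have : i < ab.1 + ab.2 := by omega
      rw [vanish hx hy this, mul_zero]
  have rhs : coeff k (mvEval F x y * mvEval G x y) = M := by
    rw [PowerSeries.coeff_mul]
    have step1 : ∀ ij ∈ Finset.HasAntidiagonal.antidiagonal k,
        coeff ij.1 (mvEval F x y) * coeff ij.2 (mvEval G x y)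
        = ∑ ab ∈ R ×ˢ R, ∑ ce ∈ R ×ˢ R,
            (MvPowerSeries.coeff (Finsupp.single 0 ab.1 + Finsupp.single 1 ab.2) F *
             MvPowerSeries.coeff (Finsupp.single 0 ce.1 + Finsupp.single 1 ce.2) G) *
              (coeff ij.1 (x ^ ab.1 * y ^ ab.2) * coeff ij.2 (x ^ ce.1 * y ^ ce.2)) := by
      intro ij hij
      rw [Finset.HasAntidiagonal.mem_antidiagonal] at hij
      rw [ext1 F ij.1 (by omega), ext1 G ij.2 (by omega), Finset.sum_mul_sum]
      apply Finset.sum_congr rfl; intro ab _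
      apply Finset.sum_congr rfl; intro ce _
      ring
    rw [Finset.sum_congr rfl step1, Finset.sum_comm, hM]
    apply Finset.sum_congr rfl; intro ab _
    rw [Finset.sum_comm]
    apply Finset.sum_congr rfl; intro ce _
    rw [← Finset.mul_sum]
    congr 1
    rw [← PowerSeries.coeff_mul]
    congr 1
    rw [pow_add, pow_add]; ring
  have lhs : coeff k (mvEval (F * G) x y) = M := by
    rw [ext1 (F * G) k le_rfl]
    have step1 : ∀ AB ∈ R ×ˢ R,
        MvPowerSeries.coeff (Finsupp.single 0 AB.1 + Finsupp.single 1 AB.2) (F * G) *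
          coeff k (x ^ AB.1 * y ^ AB.2)
        = ∑ ac ∈ Finset.HasAntidiagonal.antidiagonal AB.1, ∑ be ∈ Finset.HasAntidiagonal.antidiagonal AB.2,
            (MvPowerSeries.coeff (Finsupp.single 0 ac.1 + Finsupp.single 1 be.1) F *
             MvPowerSeries.coeff (Finsupp.single 0 ac.2 + Finsupp.single 1 be.2) G) *
              coeff k (x ^ (ac.1 + ac.2) * y ^ (be.1 + be.2)) := by
      intro AB _
      rw [MvPowerSeries.coeff_mul, antidiag_fin2 AB.1 AB.2 (fun u v => MvPowerSeries.coeff u F * MvPowerSeries.coeff v G), Finset.sum_product, Finset.sum_mul]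
      apply Finset.sum_congr rfl; intro ac hac
      rw [Finset.sum_mul]
      apply Finset.sum_congr rfl; intro be hbe
      rw [Finset.HasAntidiagonal.mem_antidiagonal] at hac hbe
      rw [hac, hbe]
    rw [Finset.sum_congr rfl step1, Finset.sum_product]
    have hM' : M = ∑ a ∈ R, ∑ b ∈ R, ∑ c ∈ R, ∑ e ∈ R,
        (MvPowerSeries.coeff (Finsupp.single 0 a + Finsupp.single 1 b) F *
         MvPowerSeries.coeff (Finsupp.single 0 c + Finsupp.single 1 e) G) *
          coeff k (x ^ (a + c) * y ^ (b + e)) := by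
      rw [hM, Finset.sum_product]
      apply Finset.sum_congr rfl; intro a _
      apply Finset.sum_congr rfl; intro b _
      rw [Finset.sum_product]
    rw [hM']
    have swap1 : ∀ A ∈ R,
        ∑ B ∈ R, ∑ ac ∈ Finset.HasAntidiagonal.antidiagonal A, ∑ be ∈ Finset.HasAntidiagonal.antidiagonal B,
            (MvPowerSeries.coeff (Finsupp.single 0 ac.1 + Finsupp.single 1 be.1) F *
             MvPowerSeries.coeff (Finsupp.single 0 ac.2 + Finsupp.single 1 be.2) G) *
              coeff k (x ^ (ac.1 + ac.2) * y ^ (be.1 + be.2))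
        = ∑ ac ∈ Finset.HasAntidiagonal.antidiagonal A, ∑ B ∈ R, ∑ be ∈ Finset.HasAntidiagonal.antidiagonal B,
            (MvPowerSeries.coeff (Finsupp.single 0 ac.1 + Finsupp.single 1 be.1) F *
             MvPowerSeries.coeff (Finsupp.single 0 ac.2 + Finsupp.single 1 be.2) G) *
              coeff k (x ^ (ac.1 + ac.2) * y ^ (be.1 + be.2)) := by
      intro A _
      exact Finset.sum_comm
    rw [Finset.sum_congr rfl swap1]
    rw [triangle k (fun a c => ∑ B ∈ R, ∑ be ∈ Finset.HasAntidiagonal.antidiagonal B,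
          (MvPowerSeries.coeff (Finsupp.single 0 a + Finsupp.single 1 be.1) F *
           MvPowerSeries.coeff (Finsupp.single 0 c + Finsupp.single 1 be.2) G) *
            coeff k (x ^ (a + c) * y ^ (be.1 + be.2)))
        (by
          intro a c hkac
          apply Finset.sum_eq_zero; intro B _
          apply Finset.sum_eq_zero; intro be _
          rw [vanish hx hy (show k < (a + c) + (be.1 + be.2) by omega), mul_zero])]
    apply Finset.sum_congr rfl; intro a _
    have inner : ∀ c ∈ R,
        ∑ B ∈ R, ∑ be ∈ Finset.HasAntidiagonal.antidiagonal B,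
            (MvPowerSeries.coeff (Finsupp.single 0 a + Finsupp.single 1 be.1) F *
             MvPowerSeries.coeff (Finsupp.single 0 c + Finsupp.single 1 be.2) G) *
              coeff k (x ^ (a + c) * y ^ (be.1 + be.2))
        = ∑ b ∈ R, ∑ e ∈ R,
            (MvPowerSeries.coeff (Finsupp.single 0 a + Finsupp.single 1 b) F *
             MvPowerSeries.coeff (Finsupp.single 0 c + Finsupp.single 1 e) G) *
              coeff k (x ^ (a + c) * y ^ (b + e)) := by
      intro c _
      exact triangle k (fun b e =>
          (MvPowerSeries.coeff (Finsupp.single 0 a + Finsupp.single 1 b) F *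
           MvPowerSeries.coeff (Finsupp.single 0 c + Finsupp.single 1 e) G) *
            coeff k (x ^ (a + c) * y ^ (b + e)))
        (by
          intro b e hkbe
          simp only [vanish hx hy (show k < (a + c) + (b + e) by omega), mul_zero])
    rw [Finset.sum_congr rfl inner, Finset.sum_comm]
  rw [lhs, rhs]

lemma coeff_zero_mvEval (F : MvPowerSeries (Fin 2) ℂ) (x y : PowerSeries ℂ) :
    coeff 0 (mvEval F x y) = MvPowerSeries.constantCoeff F := by
  rw [mvEval, coeff_mk]
  simp [Finset.range_one]

lemma mvEval_rescale (F : MvPowerSeries (Fin 2) ℂ) (x y : PowerSeries ℂ) (c : ℂ) (k : ℕ) :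
    coeff k (mvEval F (rescale c x) (rescale c y)) = c ^ k * coeff k (mvEval F x y) := by
  rw [mvEval, mvEval, coeff_mk, coeff_mk, Finset.mul_sum]
  apply Finset.sum_congr rfl
  intro ab _
  rw [← map_pow, ← map_pow, ← map_mul, coeff_rescale]
  ring

/-- The key characterization: for `g = u * h` with `u(0,0) = c₀ ≠ 0`, the jet conditions
for `g` are equivalent to `h`-evaluation having coefficients `0, …, 0, c₀⁻¹`. -/
lemma mem_iff (h u : MvPowerSeries (Fin 2) ℂ)
    (hu : MvPowerSeries.constantCoeff u ≠ 0)
    (x y : PowerSeries ℂ) (hx : constantCoeff x = 0) (hy : constantCoeff y = 0)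
    (N : ℕ) :
    ((∀ i < N, coeff i (mvEval (u * h) x y) = 0) ∧ coeff N (mvEval (u * h) x y) = 1)
    ↔ ((∀ i < N, coeff i (mvEval h x y) = 0) ∧
        coeff N (mvEval h x y) = (MvPowerSeries.constantCoeff u)⁻¹) := by
  set c0 := MvPowerSeries.constantCoeff u with hc0
  set U := mvEval u x y with hU
  set H := mvEval h x y with hH
  have hmul : mvEval (u * h) x y = U * H := mvEval_mul u h x y hx hy
  have hU0 : coeff 0 U = c0 := coeff_zero_mvEval u x y
  have key : ∀ i, coeff i (U * H)
      = c0 * coeff i H + ∑ q ∈ Finset.range i, coeff (i - q) U * coeff q H := by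
    intro i
    rw [PowerSeries.coeff_mul, ← Finset.HasAntidiagonal.map_swap_antidiagonal, Finset.sum_map]
    simp only [Function.Embedding.coeFn_mk, Prod.fst_swap, Prod.snd_swap]
    rw [Finset.Nat.sum_antidiagonal_eq_sum_range_succ_mk, Finset.sum_range_succ]
    simp only [Nat.sub_self, hU0]
    rw [add_comm]
  constructor
  · rintro ⟨h1, h2⟩
    have hz : ∀ i < N, coeff i H = 0 := by
      intro i hi
      induction i using Nat.strong_induction_on with
      | _ i ih =>
        have := h1 i hi
        rw [hmul, key] at this
        have hsum : ∑ q ∈ Finset.range i, coeff (i - q) U * coeff q H = 0 := by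
          apply Finset.sum_eq_zero
          intro q hq
          rw [Finset.mem_range] at hq
          rw [ih q hq (by omega), mul_zero]
        rw [hsum, add_zero] at this
        exact (mul_eq_zero.mp this).resolve_left hu
    refine ⟨hz, ?_⟩
    rw [hmul, key] at h2
    have hsum : ∑ q ∈ Finset.range N, coeff (N - q) U * coeff q H = 0 := by
      apply Finset.sum_eq_zero
      intro q hq
      rw [Finset.mem_range] at hq
      rw [hz q hq, mul_zero]
    rw [hsum, add_zero] at h2
    field_simp
    rw [mul_comm] at h2
    exact h2
  · rintro ⟨h1, h2⟩
    have hco : ∀ i ≤ N, coeff i (mvEval (u * h) x y)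
        = c0 * coeff i H := by
      intro i hi
      rw [hmul, key]
      have hsum : ∑ q ∈ Finset.range i, coeff (i - q) U * coeff q H = 0 := by
        apply Finset.sum_eq_zero
        intro q hq
        rw [Finset.mem_range] at hq
        rw [h1 q (by omega), mul_zero]
      rw [hsum, add_zero]
    constructor
    · intro i hi
      rw [hco i (by omega), h1 i hi, mul_zero]
    · rw [hco N le_rfl, h2, mul_inv_cancel₀ hu]

/-- Rescaling a polynomial: `p(t) ↦ p(ct)`. -/
noncomputable def scaleP (c : ℂ) (p : Polynomial ℂ) : Polynomial ℂ :=
  p.sum fun n a => Polynomial.monomial n (c ^ n * a)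

lemma scaleP_coeff (c : ℂ) (p : Polynomial ℂ) (k : ℕ) :
    (scaleP c p).coeff k = c ^ k * p.coeff k := by
  rw [scaleP, Polynomial.coeff_sum]
  rw [Polynomial.sum_def]
  simp only [Polynomial.coeff_monomial]
  rw [Finset.sum_ite_eq' p.support k (fun n => c ^ n * p.coeff n)]
  by_cases hk : k ∈ p.support
  · rw [if_pos hk]
  · rw [if_neg hk]
    rw [Polynomial.notMem_support_iff.mp hk, mul_zero]

lemma scaleP_scaleP (c : ℂ) (hc : c ≠ 0) (p : Polynomial ℂ) :
    scaleP c⁻¹ (scaleP c p) = p := by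
  ext k
  rw [scaleP_coeff, scaleP_coeff, ← mul_assoc, ← mul_pow, inv_mul_cancel₀ hc, one_pow, one_mul]

lemma scaleP_degree (c : ℂ) (p : Polynomial ℂ) {N : ℕ} (hp : p.degree ≤ N) :
    (scaleP c p).degree ≤ N := by
  apply Polynomial.degree_le_iff_coeff_zero _ _ |>.mpr
  intro m hm
  rw [scaleP_coeff, Polynomial.degree_le_iff_coeff_zero _ _ |>.mp hp m hm, mul_zero]

lemma scaleP_coe (c : ℂ) (p : Polynomial ℂ) :
    ((scaleP c p : Polynomial ℂ) : PowerSeries ℂ) = rescale c (p : PowerSeries ℂ) := by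
  ext k
  rw [Polynomial.coeff_coe, coeff_rescale, Polynomial.coeff_coe, scaleP_coeff]

/-- The jet space `X_{N,1}(F)`: pairs of polynomials `(x,y)` of degree at most `N` with
zero constant term such that `F(x(t),y(t)) ≡ t^N (mod t^{N+1})`. -/
noncomputable def jetSpace (N : ℕ) (F : MvPowerSeries (Fin 2) ℂ) :
    Set (Polynomial ℂ × Polynomial ℂ) :=
  {xy | xy.1.degree ≤ N ∧ xy.2.degree ≤ N ∧ xy.1.coeff 0 = 0 ∧ xy.2.coeff 0 = 0 ∧
    (∀ i < N, PowerSeries.coeff i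
        (mvEval F (xy.1 : PowerSeries ℂ) (xy.2 : PowerSeries ℂ)) = 0) ∧
    PowerSeries.coeff N
        (mvEval F (xy.1 : PowerSeries ℂ) (xy.2 : PowerSeries ℂ)) = 1}

lemma coe_constantCoeff_zero {p : Polynomial ℂ} (hp : p.coeff 0 = 0) :
    constantCoeff (p : PowerSeries ℂ) = 0 := by
  rw [← PowerSeries.coeff_zero_eq_constantCoeff_apply, Polynomial.coeff_coe, hp]

/-- Let `h, u ∈ ℂ[[X,Y]]` with `u(0,0) ≠ 0` and `h(0,0) = 0`, and set `g = u·h`.  Then for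
every positive integer `N` there is a bijection between the jet spaces `X_{N,1}(g)` and
`X_{N,1}(h)`. -/
theorem stmt11 (h u : MvPowerSeries (Fin 2) ℂ)
    (hu : MvPowerSeries.constantCoeff u ≠ 0)
    (hh : MvPowerSeries.constantCoeff h = 0)
    (g : MvPowerSeries (Fin 2) ℂ) (hg : g = u * h)
    (N : ℕ) (hN : 0 < N) :
    Nonempty (jetSpace N g ≃ jetSpace N h) := by
  set c0 := MvPowerSeries.constantCoeff u with hc0
  obtain ⟨lam, hlam⟩ := IsAlgClosed.exists_pow_nat_eq c0 hN
  have hlam0 : lam ≠ 0 := by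
    intro h0
    rw [h0, zero_pow (by omega)] at hlam
    exact hu hlam.symm
  have fwd : ∀ xy : Polynomial ℂ × Polynomial ℂ, xy ∈ jetSpace N g →
      (scaleP lam xy.1, scaleP lam xy.2) ∈ jetSpace N h := by
    rintro ⟨x, y⟩ ⟨hd1, hd2, hc1, hc2, hlow, htop⟩
    have hx : constantCoeff (x : PowerSeries ℂ) = 0 := coe_constantCoeff_zero hc1
    have hy : constantCoeff (y : PowerSeries ℂ) = 0 := coe_constantCoeff_zero hc2
    rw [hg] at hlow htop
    obtain ⟨hHlow, hHtop⟩ := (mem_iff h u hu _ _ hx hy N).mp ⟨hlow, htop⟩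
    refine ⟨scaleP_degree _ _ hd1, scaleP_degree _ _ hd2, ?_, ?_, ?_, ?_⟩
    · rw [scaleP_coeff, pow_zero, one_mul, hc1]
    · rw [scaleP_coeff, pow_zero, one_mul, hc2]
    · intro i hi
      rw [scaleP_coe, scaleP_coe, mvEval_rescale, hHlow i hi, mul_zero]
    · rw [scaleP_coe, scaleP_coe, mvEval_rescale, hHtop, hlam, mul_inv_cancel₀ hu]
  have bwd : ∀ xy : Polynomial ℂ × Polynomial ℂ, xy ∈ jetSpace N h →
      (scaleP lam⁻¹ xy.1, scaleP lam⁻¹ xy.2) ∈ jetSpace N g := by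
    rintro ⟨x, y⟩ ⟨hd1, hd2, hc1, hc2, hlow, htop⟩
    have hx : constantCoeff ((scaleP lam⁻¹ x : Polynomial ℂ) : PowerSeries ℂ) = 0 :=
      coe_constantCoeff_zero (by rw [scaleP_coeff, pow_zero, one_mul, hc1])
    have hy : constantCoeff ((scaleP lam⁻¹ y : Polynomial ℂ) : PowerSeries ℂ) = 0 :=
      coe_constantCoeff_zero (by rw [scaleP_coeff, pow_zero, one_mul, hc2])
    refine ⟨scaleP_degree _ _ hd1, scaleP_degree _ _ hd2,
      by rw [scaleP_coeff, pow_zero, one_mul, hc1],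
      by rw [scaleP_coeff, pow_zero, one_mul, hc2], ?_⟩
    rw [hg]
    have := (mem_iff h u hu _ _ hx hy N).mpr ⟨?_, ?_⟩
    · exact this
    · intro i hi
      rw [scaleP_coe, scaleP_coe, mvEval_rescale, hlow i hi, mul_zero]
    · rw [scaleP_coe, scaleP_coe, mvEval_rescale, htop, mul_one, inv_pow, hlam]
  refine ⟨{
    toFun := fun p => ⟨(scaleP lam p.1.1, scaleP lam p.1.2), fwd p.1 p.2⟩
    invFun := fun p => ⟨(scaleP lam⁻¹ p.1.1, scaleP lam⁻¹ p.1.2), bwd p.1 p.2⟩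
    left_inv := ?_
    right_inv := ?_ }⟩
  · rintro ⟨⟨x, y⟩, hp⟩
    apply Subtype.ext
    simp only
    rw [scaleP_scaleP lam hlam0, scaleP_scaleP lam hlam0]
  · rintro ⟨⟨x, y⟩, hp⟩
    apply Subtype.ext
    simp only
    have h1 := scaleP_scaleP lam⁻¹ (inv_ne_zero hlam0) x
    have h2 := scaleP_scaleP lam⁻¹ (inv_ne_zero hlam0) y
    rw [inv_inv] at h1 h2
    rw [h1, h2]
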